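/- arXiv:2502.16512 — 4 statements merged into one kernel-verified Lean document; each statement's English description precedes it below -/
import Mathlib

section
/- For every n ≥ 1, the set of matrices M ∈ ℝ^{n×n} for which the semigroup (e^{tM})_{t≥0} is eventually strongly positive is an open subset of ℝ^{n×n}. -/
open Matrix

lemma espp_mul_pos {n : ℕ} (hn : 1 ≤ n) {A B : Matrix (Fin n) (Fin n) ℝ}
    (hA : ∀ i j, 0 < A i j) (hB : ∀ i j, 0 < B i j) : ∀ i j, 0 < (A * B) i j := by
  haveI : Nonempty (Fin n) := Fin.pos_iff_nonempty.mp hn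
  intro i j
  rw [Matrix.mul_apply]
  exact Finset.sum_pos (fun k _ => mul_pos (hA i k) (hB k j)) Finset.univ_nonempty

lemma espp_exp_split {n : ℕ} (N : Matrix (Fin n) (Fin n) ℝ) (s t : ℝ) :
    NormedSpace.exp ((s + t) • N) = NormedSpace.exp (s • N) * NormedSpace.exp (t • N) := by
  rw [add_smul]
  exact Matrix.exp_add_of_commute _ _ (((Commute.refl N).smul_left s).smul_right t)

lemma espp_continuous (n : ℕ) :
    Continuous (fun p : ℝ × Matrix (Fin n) (Fin n) ℝ => NormedSpace.exp (p.1 • p.2)) := by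
  letI : SeminormedRing (Matrix (Fin n) (Fin n) ℝ) := Matrix.linftyOpSemiNormedRing
  letI : NormedRing (Matrix (Fin n) (Fin n) ℝ) := Matrix.linftyOpNormedRing
  letI : NormedAlgebra ℝ (Matrix (Fin n) (Fin n) ℝ) := Matrix.linftyOpNormedAlgebra
  letI : NormedAlgebra ℚ (Matrix (Fin n) (Fin n) ℝ) := Matrix.linftyOpNormedAlgebra
  exact NormedSpace.exp_continuous.comp (continuous_fst.smul continuous_snd)

/-- For every `n ≥ 1`, the set of `M ∈ ℝ^{n×n}` generating an eventually
strongly positive semigroup `(e^{tM})_{t ≥ 0}` is open in `ℝ^{n×n}`. -/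
theorem eventually_strongly_positive_isOpen (n : ℕ) (hn : 1 ≤ n) :
    IsOpen {M : Matrix (Fin n) (Fin n) ℝ |
      ∃ t₀ : ℝ, 0 < t₀ ∧ ∀ t : ℝ, t₀ ≤ t → ∀ i j, 0 < NormedSpace.exp (t • M) i j} := by
  rw [isOpen_iff_mem_nhds]
  rintro M ⟨t₀, ht₀, hM⟩
  -- the open set of pairs (t, N) with exp (t • N) strongly positive
  set U : Set (ℝ × Matrix (Fin n) (Fin n) ℝ) :=
    {p | ∀ i j, 0 < NormedSpace.exp (p.1 • p.2) i j} with hU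
  have hUopen : IsOpen U := by
    have : U = ⋂ i, ⋂ j, {p : ℝ × Matrix (Fin n) (Fin n) ℝ |
        0 < NormedSpace.exp (p.1 • p.2) i j} := by
      ext p; simp [hU, Set.mem_iInter]
    rw [this]
    refine isOpen_iInter_of_finite fun i => isOpen_iInter_of_finite fun j => ?_
    exact isOpen_lt continuous_const ((espp_continuous n).matrix_elem i j)
  have hsub : Set.Icc t₀ (2 * t₀) ×ˢ ({M} : Set (Matrix (Fin n) (Fin n) ℝ)) ⊆ U := by
    rintro ⟨t, N⟩ ⟨ht, hN⟩
    rcases hN with rfl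
    exact hM t ht.1
  obtain ⟨u, v, hu, hv, hsu, htv, huv⟩ :=
    generalized_tube_lemma isCompact_Icc isCompact_singleton hUopen hsub
  refine Filter.mem_of_superset (hv.mem_nhds (htv rfl)) ?_
  intro N hN
  refine ⟨t₀, ht₀, ?_⟩
  -- on [t₀, 2t₀] everything is fine by construction
  have base : ∀ t, t ∈ Set.Icc t₀ (2 * t₀) → ∀ i j, 0 < NormedSpace.exp (t • N) i j := by
    intro t ht
    have h : (t, N) ∈ U := huv (Set.mem_prod.mpr ⟨hsu ht, hN⟩)
    exact h
  -- extend to all t ≥ t₀ by induction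
  have key : ∀ k : ℕ, ∀ t, t₀ ≤ t → t ≤ (k + 2) * t₀ →
      ∀ i j, 0 < NormedSpace.exp (t • N) i j := by
    intro k
    induction k with
    | zero => intro t h1 h2; push_cast at h2; exact base t ⟨h1, by linarith⟩
    | succ m ih =>
      intro t h1 h2
      by_cases hc : t ≤ (m + 2) * t₀
      · exact ih t h1 hc
      · push_neg at hc
        have hm : (0:ℝ) ≤ (m:ℝ) := Nat.cast_nonneg m
        have h3 : t₀ ≤ t - t₀ := by nlinarith
        have h4 : t - t₀ ≤ ((m:ℝ) + 2) * t₀ := by push_cast at h2; nlinarith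
        have := espp_exp_split N t₀ (t - t₀)
        rw [show t₀ + (t - t₀) = t by ring] at this
        rw [this]
        exact espp_mul_pos hn (base t₀ ⟨le_refl _, by linarith⟩) (ih (t - t₀) h3 h4)
  intro t ht
  obtain ⟨k, hk⟩ := exists_nat_ge (t / t₀)
  refine key k t ht ?_ 
  have : t ≤ k * t₀ := by
    rw [div_le_iff₀ ht₀] at hk
    linarith
  nlinarith
end

section
/- Let M ∈ ℂ^{d×d}. If e^{tM} is positive for all t ≥ 0 (i.e. all entries of e^{tM} are nonnegative real numbers), and if there exists t₀ > 0 such that e^{−tM} is positive for all t ≥ t₀, then e^{tM} is positive for every t ∈ ℝ. -/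
open Matrix

/-- A complex matrix is (entrywise) positive: all entries are nonnegative real numbers. -/
def Matrix.EntrywisePos {d : ℕ} (A : Matrix (Fin d) (Fin d) ℂ) : Prop :=
  ∀ i j, 0 ≤ (A i j).re ∧ (A i j).im = 0

lemma Matrix.EntrywisePos.mul {d : ℕ} {A B : Matrix (Fin d) (Fin d) ℂ}
    (hA : Matrix.EntrywisePos A) (hB : Matrix.EntrywisePos B) :
    Matrix.EntrywisePos (A * B) := by
  intro i j
  simp only [Matrix.mul_apply]
  constructor
  · rw [Complex.re_sum]
    refine Finset.sum_nonneg fun k _ => ?_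
    rw [Complex.mul_re, (hA i k).2, (hB k j).2]
    simpa using mul_nonneg (hA i k).1 (hB k j).1
  · rw [Complex.im_sum]
    refine Finset.sum_eq_zero fun k _ => ?_
    rw [Complex.mul_im, (hA i k).2, (hB k j).2]
    ring

/-- Let `M ∈ ℂ^{d×d}`.  If `e^{tM}` is positive for all `t ≥ 0` and there is
`t₀ > 0` such that `e^{−tM}` is positive for all `t ≥ t₀`, then `e^{tM}` is positive for every
`t ∈ ℝ`. -/
theorem exp_positive_group_of_positive_semigroups {d : ℕ} (M : Matrix (Fin d) (Fin d) ℂ)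
    (hpos : ∀ t : ℝ, 0 ≤ t → Matrix.EntrywisePos (NormedSpace.exp ((t : ℂ) • M)))
    (hev : ∃ t₀ : ℝ, 0 < t₀ ∧ ∀ t : ℝ, t₀ ≤ t →
      Matrix.EntrywisePos (NormedSpace.exp ((t : ℂ) • (-M)))) :
    ∀ t : ℝ, Matrix.EntrywisePos (NormedSpace.exp ((t : ℂ) • M)) := by
  obtain ⟨t₀, ht₀, hneg⟩ := hev
  intro t
  rcases le_or_gt 0 t with ht | ht
  · exact hpos t ht
  · -- t < 0
    rcases le_or_gt t₀ (-t) with hle | hlt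
    · have := hneg (-t) hle
      convert this using 2
      push_cast
      rw [smul_neg, ← neg_smul, neg_neg]
    · have h1 : Matrix.EntrywisePos (NormedSpace.exp (((-t₀ : ℝ) : ℂ) • M)) := by
        have := hneg t₀ le_rfl
        convert this using 2
        push_cast
        rw [smul_neg, ← neg_smul]
      have h2 : Matrix.EntrywisePos (NormedSpace.exp (((t₀ + t : ℝ) : ℂ) • M)) :=
        hpos _ (by linarith)
      have hc : Commute (((-t₀ : ℝ) : ℂ) • M) (((t₀ + t : ℝ) : ℂ) • M) :=
        ((Commute.refl M).smul_left _).smul_right _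
      have key : NormedSpace.exp (((-t₀ : ℝ) : ℂ) • M) *
          NormedSpace.exp (((t₀ + t : ℝ) : ℂ) • M) = NormedSpace.exp ((t : ℂ) • M) := by
        rw [← Matrix.exp_add_of_commute _ _ hc, ← add_smul]
        norm_num
      rw [← key]
      exact h1.mul h2
end

section
/- Let M ∈ ℂ^{d×d}. If e^{tM} is positive for every t ∈ ℝ (i.e. all entries of e^{tM} are nonnegative real numbers for every real t), then M is a diagonal matrix all of whose diagonal entries are real. -/
open Matrix

/-- Each entry of `t ↦ exp(tM)` has derivative `M i j` at `t = 0`. -/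
lemma entry_hasDerivAt_exp {d : ℕ} (M : Matrix (Fin d) (Fin d) ℂ) (i j : Fin d) :
    HasDerivAt (fun t : ℝ => (NormedSpace.exp ((t : ℂ) • M)) i j) (M i j) 0 := by
  letI : SeminormedRing (Matrix (Fin d) (Fin d) ℂ) := Matrix.linftyOpSemiNormedRing
  letI : NormedRing (Matrix (Fin d) (Fin d) ℂ) := Matrix.linftyOpNormedRing
  letI : NormedAlgebra ℂ (Matrix (Fin d) (Fin d) ℂ) := Matrix.linftyOpNormedAlgebra
  have hg : HasDerivAt (fun u : ℂ => NormedSpace.exp (u • M))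
      (NormedSpace.exp ((0 : ℂ) • M) * M) 0 :=
    hasDerivAt_exp_smul_const M 0
  have hh : HasDerivAt (fun t : ℝ => (t : ℂ)) 1 0 := by
    exact Complex.ofRealCLM.hasDerivAt (x := (0 : ℝ))
  have hmat := hg.scomp_of_eq (0 : ℝ) hh (by norm_num)
  have hmat' : HasDerivAt (fun t : ℝ => NormedSpace.exp ((t : ℂ) • M)) M 0 := by
    simp only [zero_smul, NormedSpace.exp_zero, one_mul, one_smul] at hmat; exact hmat
  have hL := ((LinearMap.toContinuousLinearMap
      (Matrix.entryLinearMap ℝ ℂ i j)).hasFDerivAt).comp_hasDerivAt (0 : ℝ) hmat'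
  exact hL

/-- Let `M ∈ ℂ^{d×d}`.  If `e^{tM}` is positive for every `t ∈ ℝ`, then `M`
is a diagonal matrix all of whose diagonal entries are real. -/
theorem diagonal_of_exp_positive_group {d : ℕ} (M : Matrix (Fin d) (Fin d) ℂ)
    (hpos : ∀ t : ℝ, Matrix.EntrywisePos (NormedSpace.exp ((t : ℂ) • M))) :
    (∀ i j, i ≠ j → M i j = 0) ∧ (∀ i, (M i i).im = 0) := by
  have him : ∀ i j, (M i j).im = 0 := by
    intro i j
    have hIm : HasDerivAt (fun t : ℝ => ((NormedSpace.exp ((t : ℂ) • M)) i j).im)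
        (M i j).im 0 :=
      (Complex.imCLM.hasFDerivAt).comp_hasDerivAt (0 : ℝ) (entry_hasDerivAt_exp M i j)
    have hconst : (fun t : ℝ => ((NormedSpace.exp ((t : ℂ) • M)) i j).im)
        = fun _ : ℝ => (0 : ℝ) := funext fun t => (hpos t i j).2
    have h0 : HasDerivAt (fun t : ℝ => ((NormedSpace.exp ((t : ℂ) • M)) i j).im) 0 0 := by
      rw [hconst]; exact hasDerivAt_const _ _
    exact hIm.unique h0
  refine ⟨fun i j hij => ?_, fun i => him i i⟩
  have hRe : HasDerivAt (fun t : ℝ => ((NormedSpace.exp ((t : ℂ) • M)) i j).re)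
      (M i j).re 0 :=
    (Complex.reCLM.hasFDerivAt).comp_hasDerivAt (0 : ℝ) (entry_hasDerivAt_exp M i j)
  have hval0 : ((NormedSpace.exp (((0 : ℝ) : ℂ) • M)) i j).re = 0 := by
    simp [NormedSpace.exp_zero, Matrix.one_apply_ne hij]
  have hmin : IsLocalMin (fun t : ℝ => ((NormedSpace.exp ((t : ℂ) • M)) i j).re) 0 :=
    Filter.Eventually.of_forall fun t => hval0.trans_le (hpos t i j).1
  have hre : (M i j).re = 0 := hmin.hasDerivAt_eq_zero hRe
  exact Complex.ext hre (him i j)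
end

section
/- Let G be a finite connected simple graph with vertex set V = {v_1,…,v_n} (n ≥ 2), edge set E, and edge lengths L_{kj} ∈ (0,∞). If λ ∈ ℝ satisfies λ < min_{(k,j)∈E} (π/L_{kj})², then the matrix D_{λ,V} is defined (for 0 < λ one has √λ·L_{kj} ∈ (0,π), so sin(√λ·L_{kj}) ≠ 0 for every edge) and the semigroup (e^{−t·D_{λ,V}})_{t≥0} is strongly positive. -/
open Matrix

/-- `β_{kj}(λ)` for an edge of length `L`. -/
noncomputable def betaFn (L lam : ℝ) : ℝ :=
  if 0 < lam then Real.sqrt lam / Real.sin (Real.sqrt lam * L)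
  else if lam = 0 then 1 / L
  else Real.sqrt (-lam) / Real.sinh (Real.sqrt (-lam) * L)

/-- `α_{kj}(λ)` for an edge of length `L`. -/
noncomputable def alphaFn (L lam : ℝ) : ℝ :=
  if 0 < lam then Real.sqrt lam * Real.cos (Real.sqrt lam * L) / Real.sin (Real.sqrt lam * L)
  else if lam = 0 then 1 / L
  else Real.sqrt (-lam) * Real.cosh (Real.sqrt (-lam) * L) / Real.sinh (Real.sqrt (-lam) * L)

/-- The Dirichlet-to-Neumann matrix `D_{λ,V}` of a quantum graph with adjacency `G` and edge
lengths `L`. -/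
noncomputable def DtN {V : Type*} [Fintype V] [DecidableEq V]
    (G : SimpleGraph V) [DecidableRel G.Adj] (L : V → V → ℝ) (lam : ℝ) :
    Matrix V V ℝ := fun k j =>
  if k = j then ∑ l, (if G.Adj k l then alphaFn (L k l) lam else 0)
  else if G.Adj k j then -betaFn (L k j) lam else 0


section Aux
variable {n : ℕ}

lemma pow_entry_nonneg (B : Matrix (Fin n) (Fin n) ℝ) (hB : ∀ i j, 0 ≤ B i j) (m : ℕ) :
    ∀ i j, 0 ≤ (B ^ m) i j := by
  induction m with
  | zero => intro i j; rw [pow_zero]; by_cases h : i = j <;> simp [Matrix.one_apply, h]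
  | succ m ih =>
    intro i j
    rw [pow_succ', Matrix.mul_apply]
    exact Finset.sum_nonneg fun l _ => mul_nonneg (hB i l) (ih l j)

lemma pow_entry_le (B : Matrix (Fin n) (Fin n) ℝ) (hB : ∀ i j, 0 ≤ B i j)
    (C : ℝ) (hC0 : 1 ≤ C) (hC : ∀ i j, B i j ≤ C) (m : ℕ) :
    ∀ i j, (B ^ m) i j ≤ ((n : ℝ) * C + 1) ^ m := by
  have hnC : (0:ℝ) ≤ (n : ℝ) * C := mul_nonneg (Nat.cast_nonneg n) (le_trans zero_le_one hC0)
  induction m with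
  | zero => intro i j; rw [pow_zero, pow_zero]; by_cases h : i = j <;> simp [Matrix.one_apply, h]
  | succ m ih =>
    intro i j
    rw [pow_succ', Matrix.mul_apply, pow_succ']
    calc ∑ l, B i l * (B ^ m) l j ≤ ∑ _l : Fin n, C * ((n:ℝ) * C + 1) ^ m := by
          refine Finset.sum_le_sum fun l _ => ?_
          exact mul_le_mul (hC i l) (ih l j) (pow_entry_nonneg B hB m l j)
            (le_trans zero_le_one hC0)
      _ = (n : ℝ) * C * ((n:ℝ) * C + 1) ^ m := by
          rw [Finset.sum_const, Finset.card_fin, nsmul_eq_mul, mul_assoc]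
      _ ≤ ((n:ℝ) * C + 1) * ((n:ℝ) * C + 1) ^ m := by
          refine mul_le_mul_of_nonneg_right (by linarith) (pow_nonneg (by linarith) m)

lemma walk_pow_pos {G : SimpleGraph (Fin n)} (B : Matrix (Fin n) (Fin n) ℝ)
    (hB : ∀ i j, 0 ≤ B i j) (hadj : ∀ i j, G.Adj i j → 0 < B i j)
    {i j : Fin n} (p : G.Walk i j) : 0 < (B ^ p.length) i j := by
  induction p with
  | nil => simp [pow_zero, Matrix.one_apply]
  | @cons a b c h p ih =>
    rw [SimpleGraph.Walk.length_cons, pow_succ', Matrix.mul_apply]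
    refine Finset.sum_pos' (fun l _ => mul_nonneg (hB a l) (pow_entry_nonneg B hB _ l c)) ?_
    exact ⟨b, Finset.mem_univ b, mul_pos (hadj a b h) ih⟩

lemma exp_entry_pos (G : SimpleGraph (Fin n)) (hconn : G.Connected)
    (B : Matrix (Fin n) (Fin n) ℝ) (hB : ∀ i j, 0 ≤ B i j)
    (hadj : ∀ i j, G.Adj i j → 0 < B i j) (i j : Fin n) :
    0 < NormedSpace.exp B i j := by
  -- bound the entries
  set C : ℝ := 1 + ∑ k, ∑ l, B k l with hCdef
  have hC1 : 1 ≤ C := by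
    have : (0:ℝ) ≤ ∑ k, ∑ l, B k l :=
      Finset.sum_nonneg fun k _ => Finset.sum_nonneg fun l _ => hB k l
    simp [hCdef]; linarith
  have hCle : ∀ k l, B k l ≤ C := by
    intro k l
    have h1 : B k l ≤ ∑ l', B k l' :=
      Finset.single_le_sum (fun l' _ => hB k l') (Finset.mem_univ l)
    have h2 : ∑ l', B k l' ≤ ∑ k', ∑ l', B k' l' :=
      Finset.single_le_sum (fun k' _ => Finset.sum_nonneg fun l' _ => hB k' l')
        (Finset.mem_univ k)
    simp only [hCdef]; linarith
  have hsum_e : ∀ k l : Fin n, Summable fun m : ℕ => (((Nat.factorial m : ℝ))⁻¹ • B ^ m) k l := by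
    intro k l
    simp only [Matrix.smul_apply, smul_eq_mul]
    refine Summable.of_nonneg_of_le
      (fun m => mul_nonneg (inv_nonneg.2 (Nat.cast_nonneg _)) (pow_entry_nonneg B hB m k l))
      (fun m => ?_) (Real.summable_pow_div_factorial ((n:ℝ) * C + 1))
    rw [div_eq_inv_mul]
    exact mul_le_mul_of_nonneg_left (pow_entry_le B hB C hC1 hCle m k l)
      (inv_nonneg.2 (Nat.cast_nonneg _))
  have hsumM : Summable fun m : ℕ => ((Nat.factorial m : ℝ))⁻¹ • B ^ m :=
    Pi.summable.2 fun k => Pi.summable.2 fun l => hsum_e k l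
  have hrow : ∀ k, Summable fun m : ℕ => (((Nat.factorial m : ℝ))⁻¹ • B ^ m) k :=
    fun k => Pi.summable.2 fun l => hsum_e k l
  have hexp : NormedSpace.exp B = ∑' m : ℕ, ((Nat.factorial m : ℝ))⁻¹ • B ^ m :=
    congrFun (NormedSpace.exp_eq_tsum ℝ) B
  rw [hexp]
  have h1 : (∑' m : ℕ, ((Nat.factorial m : ℝ))⁻¹ • B ^ m) i j = ∑' m : ℕ, (((Nat.factorial m : ℝ))⁻¹ • B ^ m) i j := by
    rw [show (∑' m : ℕ, ((Nat.factorial m : ℝ))⁻¹ • B ^ m) i = ∑' m : ℕ, (((Nat.factorial m : ℝ))⁻¹ • B ^ m) i from tsum_apply hsumM, tsum_apply (hrow i)]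
  rw [h1]
  obtain ⟨p⟩ := (hconn.preconnected i j)
  refine Summable.tsum_pos (hsum_e i j) (fun m => ?_) p.length ?_
  · simp only [Matrix.smul_apply, smul_eq_mul]
    exact mul_nonneg (inv_nonneg.2 (Nat.cast_nonneg _)) (pow_entry_nonneg B hB m i j)
  · simp only [Matrix.smul_apply, smul_eq_mul]
    exact mul_pos (inv_pos.2 (by positivity)) (walk_pow_pos B hB hadj p)

end Aux

/-- If `λ < min_{(k,j)∈E} (π/L_{kj})²`, then `D_{λ,V}` is defined (for
`0 < λ` one has `sin(√λ·L_{kj}) ≠ 0` on every edge) and the semigroup `(e^{−tD_{λ,V}})_{t≥0}`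
is strongly positive. -/
theorem dtn_semigroup_strongly_positive_below_first_eigenvalue {n : ℕ} (hn : 2 ≤ n)
    (G : SimpleGraph (Fin n)) [DecidableRel G.Adj] (hconn : G.Connected)
    (L : Fin n → Fin n → ℝ) (hsymm : ∀ k j, L k j = L j k)
    (hLpos : ∀ k j, G.Adj k j → 0 < L k j)
    (lam : ℝ) (hlam : ∀ k j, G.Adj k j → lam < (Real.pi / L k j) ^ 2) :
    (0 < lam → ∀ k j, G.Adj k j → Real.sin (Real.sqrt lam * L k j) ≠ 0) ∧
      ∀ t : ℝ, 0 < t → ∀ i j, 0 < NormedSpace.exp (t • (-(DtN G L lam))) i j := by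
  have hsinpos : 0 < lam → ∀ k j, G.Adj k j → 0 < Real.sin (Real.sqrt lam * L k j) := by
    intro hl k j hadj
    have hL := hLpos k j hadj
    have h1 : 0 < Real.sqrt lam * L k j := mul_pos (Real.sqrt_pos.2 hl) hL
    have h2 : Real.sqrt lam < Real.pi / L k j :=
      (Real.sqrt_lt' (div_pos Real.pi_pos hL)).2 (hlam k j hadj)
    have h3 : Real.sqrt lam * L k j < Real.pi := (lt_div_iff₀ hL).1 h2
    exact Real.sin_pos_of_pos_of_lt_pi h1 h3
  have hbeta : ∀ k j, G.Adj k j → 0 < betaFn (L k j) lam := by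
    intro k j hadj
    have hL := hLpos k j hadj
    unfold betaFn
    rcases lt_trichotomy lam 0 with h | h | h
    · rw [if_neg (by linarith), if_neg (ne_of_lt h)]
      refine div_pos (Real.sqrt_pos.2 (by linarith)) ?_
      exact (Real.sinh_pos_iff).2 (mul_pos (Real.sqrt_pos.2 (by linarith)) hL)
    · rw [if_neg (by simp [h]), if_pos h]
      exact one_div_pos.2 hL
    · rw [if_pos h]
      exact div_pos (Real.sqrt_pos.2 h) (hsinpos h k j hadj)
  refine ⟨fun hl k j hadj => ne_of_gt (hsinpos hl k j hadj), ?_⟩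
  intro t ht i j
  set D : Matrix (Fin n) (Fin n) ℝ := DtN G L lam with hD
  set c : ℝ := ∑ i, |D i i| with hc
  set A : Matrix (Fin n) (Fin n) ℝ := -D + c • 1 with hA
  have hDoff : ∀ k j, k ≠ j → D k j = if G.Adj k j then -betaFn (L k j) lam else 0 := by
    intro k j hkj; rw [hD]; simp [DtN, hkj]
  have hcD : ∀ k, D k k ≤ c := by
    intro k
    calc D k k ≤ |D k k| := le_abs_self _
      _ ≤ c := Finset.single_le_sum (f := fun i => |D i i|)
          (fun i _ => abs_nonneg _) (Finset.mem_univ k)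
  have hA0 : ∀ k l, 0 ≤ A k l := by
    intro k l
    by_cases hkl : k = l
    · subst hkl
      have : A k k = -D k k + c := by simp [hA, Matrix.add_apply, Matrix.one_apply_eq]
      rw [this]; linarith [hcD k]
    · have : A k l = -D k l := by
        simp [hA, Matrix.add_apply, Matrix.one_apply_ne hkl]
      rw [this, hDoff k l hkl]
      split
      · next hadj => simpa using (hbeta k l hadj).le
      · simp
  have hAadj : ∀ k l, G.Adj k l → 0 < A k l := by
    intro k l hadj
    have hkl : k ≠ l := hadj.ne
    have : A k l = -D k l := by
      simp [hA, Matrix.add_apply, Matrix.one_apply_ne hkl]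
    rw [this, hDoff k l hkl, if_pos hadj, neg_neg]
    exact hbeta k l hadj
  have hB0 : ∀ k l, 0 ≤ (t • A) k l := by
    intro k l; simp only [Matrix.smul_apply, smul_eq_mul]
    exact mul_nonneg ht.le (hA0 k l)
  have hBadj : ∀ k l, G.Adj k l → 0 < (t • A) k l := by
    intro k l hadj; simp only [Matrix.smul_apply, smul_eq_mul]
    exact mul_pos ht (hAadj k l hadj)
  have hkey := exp_entry_pos G hconn (t • A) hB0 hBadj i j
  have hsplit : t • (-D) = t • A + (-(t * c)) • (1 : Matrix (Fin n) (Fin n) ℝ) := by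
    rw [hA, smul_add, smul_smul, add_assoc, ← add_smul]
    simp
  have hcomm : Commute (t • A) ((-(t * c)) • (1 : Matrix (Fin n) (Fin n) ℝ)) :=
    (Commute.one_right (t • A)).smul_right _
  have hdiag : (-(t * c)) • (1 : Matrix (Fin n) (Fin n) ℝ)
      = Matrix.diagonal (fun _ => -(t * c)) := by
    ext k l; by_cases h : k = l <;> simp [Matrix.one_apply, Matrix.diagonal, h]
  have hprod : NormedSpace.exp (t • (-D))
      = NormedSpace.exp (t • A) * NormedSpace.exp ((-(t * c)) • 1) := by
    rw [hsplit]
    exact Matrix.exp_add_of_commute _ _ hcomm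
  have hexpdiag : NormedSpace.exp ((-(t * c)) • (1 : Matrix (Fin n) (Fin n) ℝ))
      = Matrix.diagonal (fun _ => Real.exp (-(t * c))) := by
    rw [hdiag, Matrix.exp_diagonal]
    congr 1
    rw [Pi.exp_def]
    funext k
    rw [← Real.exp_eq_exp_ℝ]
  rw [hprod, hexpdiag, Matrix.mul_diagonal]
  exact mul_pos hkey (Real.exp_pos _)
end
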